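/- Let μ ≥ 0, Ĝ > 0, r₀ ≥ 0, g ≥ 0 and c ≥ 0 be real numbers, with e_μ and T_c defined as follows: e_μ(t) := (1 − e^{−μt})/μ if μ > 0 and e_0(t) := t; T_c := +∞ if μ > 0 and r₀ ≤ μ/Ĝ; T_c := −(1/μ)·log(1 − μ/(Ĝ·r₀)) if μ > 0 and r₀ > μ/Ĝ; T_c := 1/(Ĝ·r₀) if μ = 0 (with T_c := +∞ when r₀ = 0). Let R(t) := r₀·e^{−μt}/(1 − Ĝ·r₀·e_μ(t)) for t ∈ [0,T_c). Then the function R_p(t) := c·e^{−μt}/(1 − Ĝ·r₀·e_μ(t))^{g/Ĝ} is C¹ on [0,T_c) and satisfies R_p'(t) = −μ·R_p(t) + g·R(t)·R_p(t) for all t ∈ [0,T_c), with R_p(0) = c. -/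

import Mathlib

/-- The function `e_μ` of the paper: `e_μ(t) = (1 - e^{-μt})/μ` for `μ > 0`, `e_0(t) = t`. -/
noncomputable def eMu (μ t : ℝ) : ℝ := if 0 < μ then (1 - Real.exp (-μ * t)) / μ else t

/-- The maximal control time `T_c` of the paper's Lemma 5.1. -/
noncomputable def controlTime (μ G r₀ : ℝ) : EReal :=
  if 0 < μ then
    (if r₀ ≤ μ / G then (⊤ : EReal)
     else ((-(1 / μ) * Real.log (1 - μ / (G * r₀)) : ℝ) : EReal))
  else
    (if r₀ = 0 then (⊤ : EReal) else ((1 / (G * r₀) : ℝ) : EReal))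

/-- The explicit solution of the Riccati control Cauchy problem. -/
noncomputable def controlSol (μ G r₀ t : ℝ) : ℝ :=
  r₀ * Real.exp (-μ * t) / (1 - G * r₀ * eMu μ t)

/-- The higher-order control function of the paper's Lemma 5.1(ii). -/
noncomputable def controlSolP (μ G r₀ g c t : ℝ) : ℝ :=
  c * Real.exp (-μ * t) / (1 - G * r₀ * eMu μ t) ^ (g / G)

lemma pos_aux (μ G r₀ : ℝ) (hμ : 0 ≤ μ) (hG : 0 < G) (hr : 0 ≤ r₀) (t : ℝ) (ht : 0 ≤ t)
    (hT : (t : EReal) < controlTime μ G r₀) : 0 < 1 - G * r₀ * eMu μ t := by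
  unfold controlTime at hT
  unfold eMu
  by_cases hpos : 0 < μ
  · rw [if_pos hpos] at hT ⊢
    have he : 0 < Real.exp (-μ * t) := Real.exp_pos _
    have he1 : Real.exp (-μ * t) ≤ 1 := by
      rw [Real.exp_le_one_iff]
      nlinarith
    by_cases hle : r₀ ≤ μ / G
    · have hGr : G * r₀ ≤ μ := by
        rw [le_div_iff₀ hG] at hle; nlinarith
      have h1 : G * r₀ * ((1 - Real.exp (-μ * t)) / μ) ≤ 1 - Real.exp (-μ * t) := by
        rw [mul_div_assoc'] at *
        rw [div_le_iff₀ hpos]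
        nlinarith
      linarith
    · rw [if_neg hle, EReal.coe_lt_coe_iff] at hT
      push_neg at hle
      have hr0 : 0 < r₀ := lt_trans (div_pos hpos hG) hle
      have hGr : μ < G * r₀ := by
        rw [div_lt_iff₀ hG] at hle; nlinarith
      have hx0 : 0 < 1 - μ / (G * r₀) := by
        rw [sub_pos, div_lt_one (by positivity)]; exact hGr
      have hlogx : Real.log (1 - μ / (G * r₀)) < -μ * t := by
        have : μ * t < -Real.log (1 - μ / (G * r₀)) := by
          have := (mul_lt_mul_iff_right₀ hpos).2 hT
          calc μ * t < μ * (-(1 / μ) * Real.log (1 - μ / (G * r₀))) := this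
            _ = -Real.log (1 - μ / (G * r₀)) := by field_simp
        linarith
      have hex : 1 - μ / (G * r₀) < Real.exp (-μ * t) := by
        calc 1 - μ / (G * r₀) = Real.exp (Real.log (1 - μ / (G * r₀))) := (Real.exp_log hx0).symm
          _ < Real.exp (-μ * t) := Real.exp_lt_exp.2 hlogx
      have key : G * r₀ * (1 - Real.exp (-μ * t)) < μ := by
        have h2 : 1 - Real.exp (-μ * t) < μ / (G * r₀) := by linarith
        calc G * r₀ * (1 - Real.exp (-μ * t)) < G * r₀ * (μ / (G * r₀)) := by
              apply mul_lt_mul_of_pos_left h2 (by positivity)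
          _ = μ := by field_simp
      rw [mul_div_assoc']
      rw [lt_sub_iff_add_lt, ← lt_sub_iff_add_lt', div_lt_iff₀ hpos]
      nlinarith
  · rw [if_neg hpos] at hT ⊢
    have hμ0 : μ = 0 := le_antisymm (not_lt.1 hpos) hμ
    by_cases hr0 : r₀ = 0
    · simp [hr0]
    · rw [if_neg hr0, EReal.coe_lt_coe_iff] at hT
      have hr0' : 0 < r₀ := lt_of_le_of_ne hr (Ne.symm hr0)
      have : G * r₀ * t < 1 := by
        rw [← lt_div_iff₀' (by positivity)]
        simpa [one_div] using hT
      linarith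

lemma eMu_hasDerivAt (μ : ℝ) (hμ : 0 ≤ μ) (t : ℝ) :
    HasDerivAt (eMu μ) (Real.exp (-μ * t)) t := by
  by_cases hpos : 0 < μ
  · have h1 : HasDerivAt (fun s : ℝ => (1 - Real.exp (-μ * s)) / μ)
        (Real.exp (-μ * t)) t := by
      have h2 : HasDerivAt (fun s : ℝ => Real.exp (-μ * s)) (-μ * Real.exp (-μ * t)) t := by
        simpa [mul_comm] using ((hasDerivAt_id t).const_mul (-μ)).exp
      have h3 : HasDerivAt (fun s : ℝ => 1 - Real.exp (-μ * s)) (μ * Real.exp (-μ * t)) t := by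
        exact ((hasDerivAt_const t (1:ℝ)).sub h2).congr_deriv (by ring)
      have := h3.div_const μ
      simpa [mul_div_assoc, mul_div_cancel_left₀ _ (ne_of_gt hpos)] using this
    have : eMu μ = fun s : ℝ => (1 - Real.exp (-μ * s)) / μ := by
      funext s; simp [eMu, hpos]
    rw [this]; exact h1
  · have hμ0 : μ = 0 := le_antisymm (not_lt.1 hpos) hμ
    have : eMu μ = fun s : ℝ => s := by funext s; simp [eMu, hpos]
    rw [this, hμ0]
    exact (hasDerivAt_id t).congr_deriv (by simp)

/-- Lemma 5.1(ii) of the paper: `R_p(t) = c e^{-μt}/(1 - Ĝ r₀ e_μ(t))^{g/Ĝ}`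
is a C¹ solution on `[0,T_c)` of the linear Cauchy problem `R_p' = -μ R_p + g R R_p`,
`R_p(0) = c`, with `R` the Riccati control solution. -/
theorem higher_order_control_solution
    (μ G r₀ g c : ℝ) (hμ : 0 ≤ μ) (hG : 0 < G) (hr : 0 ≤ r₀) (hg : 0 ≤ g) (hc : 0 ≤ c) :
    (∀ t : ℝ, 0 ≤ t → (t : EReal) < controlTime μ G r₀ →
      HasDerivWithinAt (controlSolP μ G r₀ g c)
        (-μ * controlSolP μ G r₀ g c t + g * controlSol μ G r₀ t * controlSolP μ G r₀ g c t)
        {s : ℝ | 0 ≤ s ∧ (s : EReal) < controlTime μ G r₀} t) ∧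
    controlSolP μ G r₀ g c 0 = c := by
  constructor
  · intro t ht hT
    set q : ℝ := g / G with hq
    have hDt : 0 < 1 - G * r₀ * eMu μ t := pos_aux μ G r₀ hμ hG hr t ht hT
    have he : 0 < Real.exp (-μ * t) := Real.exp_pos _
    have h1 : HasDerivAt (fun s : ℝ => Real.exp (-μ * s)) (-μ * Real.exp (-μ * t)) t := by
      simpa [mul_comm] using ((hasDerivAt_id t).const_mul (-μ)).exp
    have hD : HasDerivAt (fun s : ℝ => 1 - G * r₀ * eMu μ s)
        (-(G * r₀ * Real.exp (-μ * t))) t := by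
      simpa using ((eMu_hasDerivAt μ hμ t).const_mul (G * r₀)).const_sub 1
    have hP : HasDerivAt (fun s : ℝ => (1 - G * r₀ * eMu μ s) ^ (-q))
        (-(G * r₀ * Real.exp (-μ * t)) * (-q) * (1 - G * r₀ * eMu μ t) ^ (-q - 1)) t :=
      hD.rpow_const (Or.inl (ne_of_gt hDt))
    have hF : HasDerivAt (fun s : ℝ => c * Real.exp (-μ * s) * (1 - G * r₀ * eMu μ s) ^ (-q))
        ((c * (-μ * Real.exp (-μ * t))) * (1 - G * r₀ * eMu μ t) ^ (-q)
          + (c * Real.exp (-μ * t)) *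
            (-(G * r₀ * Real.exp (-μ * t)) * (-q) * (1 - G * r₀ * eMu μ t) ^ (-q - 1))) t :=
      (h1.const_mul c).mul hP
    have hEq : (c * (-μ * Real.exp (-μ * t))) * (1 - G * r₀ * eMu μ t) ^ (-q)
          + (c * Real.exp (-μ * t)) *
            (-(G * r₀ * Real.exp (-μ * t)) * (-q) * (1 - G * r₀ * eMu μ t) ^ (-q - 1))
        = -μ * controlSolP μ G r₀ g c t + g * controlSol μ G r₀ t * controlSolP μ G r₀ g c t := by
      have hPq : (0:ℝ) < (1 - G * r₀ * eMu μ t) ^ q := Real.rpow_pos_of_pos hDt q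
      rw [show -q - 1 = -q + (-1) by ring, Real.rpow_add hDt, Real.rpow_neg_one,
        Real.rpow_neg hDt.le]
      unfold controlSolP controlSol
      rw [← hq]
      have hGq : G * q = g := by rw [hq]; field_simp
      rw [← hGq]
      field_simp
    have hW : HasDerivWithinAt (fun s : ℝ => c * Real.exp (-μ * s) * (1 - G * r₀ * eMu μ s) ^ (-q))
        (-μ * controlSolP μ G r₀ g c t + g * controlSol μ G r₀ t * controlSolP μ G r₀ g c t)
        {s : ℝ | 0 ≤ s ∧ (s : EReal) < controlTime μ G r₀} t := by
      rw [← hEq]; exact hF.hasDerivWithinAt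
    refine hW.congr ?_ ?_
    · rintro s ⟨hs1, hs2⟩
      have hDs : 0 < 1 - G * r₀ * eMu μ s := pos_aux μ G r₀ hμ hG hr s hs1 hs2
      unfold controlSolP
      rw [← hq, Real.rpow_neg hDs.le, div_eq_mul_inv]
    · unfold controlSolP
      rw [← hq, Real.rpow_neg hDt.le, div_eq_mul_inv]
  · have h0 : eMu μ 0 = 0 := by unfold eMu; split <;> simp
    unfold controlSolP
    rw [h0]
    simp
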